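/- Let X be a finite n-dimensional simplicial complex satisfying condition (1_X), let 0 ≤ i ≤ n−1, and let f ∈ C^i(X). If there is a positive real number Λ such that (Δρ_v f, ρ_v f) ≤ Λ·(ρ_v f, f) for every vertex v of X, then i·(Δf, f) ≤ (Λ·(i+1) − (n−i))·(f, f). -/

import Mathlib

open Finset

open scoped Classical

variable {V : Type*}

/-- A (finite) simplicial complex on the vertex type `V`: a collection of nonempty
finite sets of vertices (the simplices) closed under passing to nonempty subsets. -/
def IsComplex [DecidableEq V] (K : Finset (Finset V)) : Prop :=
  (∀ s ∈ K, s.Nonempty) ∧ ∀ s ∈ K, ∀ t : Finset V, t ⊆ s → t.Nonempty → t ∈ K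

/-- `K` is `n`-dimensional and satisfies condition `(1_X)`: every simplex has dimension
at most `n` and is a face of some `n`-dimensional simplex (one of cardinality `n+1`). -/
def IsPureDim [DecidableEq V] (K : Finset (Finset V)) (n : ℕ) : Prop :=
  (∀ s ∈ K, s.card ≤ n + 1) ∧ ∀ s ∈ K, ∃ t ∈ K, s ⊆ t ∧ t.card = n + 1

/-- `wt K n s` : the number `w(s)` of `n`-dimensional simplices of `K` containing `s`. -/
noncomputable def wt [DecidableEq V] (K : Finset (Finset V)) (n : ℕ) (s : Finset V) : ℕ :=
  (K.filter fun t => s ⊆ t ∧ t.card = n + 1).card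

/-- An `m`-tuple of vertices is allowed when its entries are distinct and form a simplex
of `K`; i.e. it is an oriented `(m-1)`-simplex of `K`. -/
def Allowed [DecidableEq V] [Fintype V] (K : Finset (Finset V)) {m : ℕ}
    (v : Fin m → V) : Prop :=
  Function.Injective v ∧ Finset.image v Finset.univ ∈ K

/-- `f` is an `(m-1)`-cochain on `K`: a real-valued alternating function on oriented
`(m-1)`-simplices of `K` (realized as a function on all `m`-tuples of vertices which is
alternating and vanishes on tuples which are not oriented simplices of `K`). -/
def IsCochain [DecidableEq V] [Fintype V] (K : Finset (Finset V)) (m : ℕ)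
    (f : (Fin m → V) → ℝ) : Prop :=
  (∀ (σ : Equiv.Perm (Fin m)) (v : Fin m → V),
      f (v ∘ σ) = ((Equiv.Perm.sign σ : ℤ) : ℝ) * f v) ∧
  ∀ v : Fin m → V, ¬ Allowed K v → f v = 0

/-- The inner product `(f,g) = ∑_s w(s)·f(s)·g(s)` on `(m-1)`-cochains, the sum being over
the unoriented `(m-1)`-simplices `s` of `K` (each with an arbitrarily chosen orientation);
summing over all `m`-tuples counts each simplex `m!` times, whence the normalization. -/
noncomputable def innerC [DecidableEq V] [Fintype V] (K : Finset (Finset V)) (n m : ℕ)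
    (f g : (Fin m → V) → ℝ) : ℝ :=
  (∑ v : Fin m → V, (wt K n (Finset.image v Finset.univ) : ℝ) * f v * g v) /
    (Nat.factorial m : ℝ)

/-- The coboundary `d : C^{m-1}(K) → C^m(K)`. -/
noncomputable def cobound [DecidableEq V] [Fintype V] (K : Finset (Finset V)) {m : ℕ}
    (f : (Fin m → V) → ℝ) : (Fin (m + 1) → V) → ℝ :=
  fun v => if Allowed K v then
    ∑ j : Fin (m + 1), (-1 : ℝ) ^ (j : ℕ) * f (v ∘ Fin.succAbove j)
  else 0

/-- The operator `δ : C^m(K) → C^{m-1}(K)`,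
`(δf)(s) = ∑_x (w([x,s])/w(s))·f([x,s])`, the sum being over the vertices `x`
such that `[x,s]` is an oriented simplex of `K`. -/
noncomputable def codiff [DecidableEq V] [Fintype V] (K : Finset (Finset V)) (n : ℕ) {m : ℕ}
    (f : (Fin (m + 1) → V) → ℝ) : (Fin m → V) → ℝ :=
  fun s => ∑ x : V,
    if Allowed K (Fin.cons x s) then
      ((wt K n (Finset.image (Fin.cons x s) Finset.univ) : ℝ) /
          (wt K n (Finset.image s Finset.univ) : ℝ)) * f (Fin.cons x s)
    else 0

/-- The Laplace operator `Δ = δ ∘ d` on `(m-1)`-cochains. -/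
noncomputable def lap [DecidableEq V] [Fintype V] (K : Finset (Finset V)) (n : ℕ) {m : ℕ}
    (f : (Fin m → V) → ℝ) : (Fin m → V) → ℝ :=
  codiff K n (cobound K f)

/-- `ρ_v : C^{m-1}(K) → C^{m-1}(K)`: `(ρ_v f)(s) = f(s)` if `v` is a vertex of `s`,
and `0` otherwise. -/
noncomputable def rho [DecidableEq V] {m : ℕ} (v : V) (f : (Fin m → V) → ℝ) :
    (Fin m → V) → ℝ :=
  fun s => if ∃ j, s j = v then f s else 0

/-- The vertices of `K`. -/
noncomputable def verts [DecidableEq V] [Fintype V] (K : Finset (Finset V)) : Finset V :=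
  Finset.univ.filter fun v => {v} ∈ K

/-- The link `Lk(v)` of a vertex `v`: all simplices `s` of `K` with `v ∉ s` and
`s ∪ {v} ∈ K`. -/
noncomputable def linkK [DecidableEq V] (K : Finset (Finset V)) (v : V) :
    Finset (Finset V) :=
  K.filter fun s => v ∉ s ∧ insert v s ∈ K

/-- `τ_v : C^{m}(K) → C^{m-1}(Lk(v))`: `(τ_v f)(s) = f([v,s])` for `s` an oriented
simplex of the link `Lk(v)`. -/
noncomputable def tau [DecidableEq V] [Fintype V] (K : Finset (Finset V)) (v : V) {m : ℕ}
    (f : (Fin (m + 1) → V) → ℝ) : (Fin m → V) → ℝ :=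
  fun s => if Allowed (linkK K v) s then f (Fin.cons v s) else 0

/-- `c` is an eigenvalue of the Laplace operator acting on `(m-1)`-cochains of `K`. -/
def IsEigen [DecidableEq V] [Fintype V] (K : Finset (Finset V)) (n m : ℕ) (c : ℝ) : Prop :=
  ∃ f : (Fin m → V) → ℝ, f ≠ 0 ∧ IsCochain K m f ∧ lap K n f = c • f

set_option linter.unusedSectionVars false

/-! ### Auxiliary lemmas for Garland's method -/

section Garland

variable [Fintype V] [DecidableEq V]

open Equiv Equiv.Perm

lemma image_comp_perm {m : ℕ} (v : Fin m → V) (σ : Equiv.Perm (Fin m)) :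
    Finset.image (v ∘ σ) Finset.univ = Finset.image v Finset.univ := by
  rw [← Finset.image_image, Finset.image_univ_equiv]

lemma allowed_comp_perm (K : Finset (Finset V)) {m : ℕ} (v : Fin m → V)
    (σ : Equiv.Perm (Fin m)) : Allowed K (v ∘ σ) ↔ Allowed K v := by
  unfold Allowed
  rw [image_comp_perm]
  constructor
  · rintro ⟨h1, h2⟩
    refine ⟨?_, h2⟩
    have : v = (v ∘ σ) ∘ σ.symm := by ext k; simp
    rw [this]
    exact h1.comp σ.symm.injective
  · rintro ⟨h1, h2⟩
    exact ⟨h1.comp σ.injective, h2⟩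

lemma sum_comp_perm {m : ℕ} (G : (Fin m → V) → ℝ) (σ : Equiv.Perm (Fin m)) :
    ∑ v : Fin m → V, G (v ∘ σ) = ∑ v : Fin m → V, G v := by
  exact Fintype.sum_bijective (fun v : Fin m → V => v ∘ σ)
    ⟨fun a b h => by ext k; simpa using congrFun h (σ.symm k),
     fun b => ⟨b ∘ σ.symm, by ext k; simp⟩⟩ _ _ (fun v => rfl)

lemma cochain_zero {K : Finset (Finset V)} {m : ℕ} {f : (Fin m → V) → ℝ}
    (hf : IsCochain K m f) {v : Fin m → V} (hv : ¬ Allowed K v) : f v = 0 :=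
  hf.2 v hv

lemma cochain_sign {K : Finset (Finset V)} {m : ℕ} {f : (Fin m → V) → ℝ}
    (hf : IsCochain K m f) (σ : Equiv.Perm (Fin m)) (v : Fin m → V) :
    f (v ∘ σ) = ((Equiv.Perm.sign σ : ℤ) : ℝ) * f v :=
  hf.1 σ v

/-- The decomposition map `(j, e) ↦ (cycleRange j)⁻¹ * extend e`. -/
noncomputable def permDecomp (m : ℕ) (je : Fin (m + 1) × Equiv.Perm (Fin m)) :
    Equiv.Perm (Fin (m + 1)) :=
  (Equiv.Perm.decomposeFin.symm (0, je.2)).trans (Fin.cycleRange je.1).symm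

lemma permDecomp_comp_succ {m : ℕ} (j : Fin (m + 1)) (e : Equiv.Perm (Fin m)) :
    ∀ x : Fin m, permDecomp m (j, e) (Fin.succ x) = Fin.succAbove j (e x) := by
  intro x
  have h1 : (Equiv.Perm.decomposeFin.symm (0, e)) (Fin.succ x) = Fin.succ (e x) := by
    rw [Equiv.Perm.decomposeFin_symm_apply_succ]; simp
  have h2 : (Fin.cycleRange j).symm (Fin.succ (e x)) = Fin.succAbove j (e x) := by
    apply (Fin.cycleRange j).injective
    simp [Fin.cycleRange_succAbove]
  simp only [permDecomp, Equiv.trans_apply, h1, h2]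

lemma permDecomp_zero {m : ℕ} (j : Fin (m + 1)) (e : Equiv.Perm (Fin m)) :
    permDecomp m (j, e) 0 = j := by
  have h1 : (Equiv.Perm.decomposeFin.symm (0, e)) 0 = 0 :=
    Equiv.Perm.decomposeFin_symm_apply_zero 0 e
  have h2 : (Fin.cycleRange j).symm 0 = j := by
    apply (Fin.cycleRange j).injective
    simp [Fin.cycleRange_self]
  simp only [permDecomp, Equiv.trans_apply, h1, h2]

lemma permDecomp_sign {m : ℕ} (j : Fin (m + 1)) (e : Equiv.Perm (Fin m)) :
    Equiv.Perm.sign (permDecomp m (j, e)) = (-1) ^ (j : ℕ) * Equiv.Perm.sign e := by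
  have : permDecomp m (j, e) = (Fin.cycleRange j)⁻¹ * Equiv.Perm.decomposeFin.symm (0, e) := rfl
  rw [this, Equiv.Perm.sign_mul, Equiv.Perm.sign_inv, Fin.sign_cycleRange,
    Equiv.Perm.decomposeFin.symm_sign]
  simp

lemma permDecomp_bijective (m : ℕ) : Function.Bijective (permDecomp m) := by
  rw [Fintype.bijective_iff_injective_and_card]
  constructor
  · rintro ⟨j, e⟩ ⟨j', e'⟩ h
    have hj : j = j' := by
      rw [← permDecomp_zero j e, ← permDecomp_zero j' e', h]
    subst hj
    have he : e = e' := by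
      apply Equiv.ext; intro x
      have := congrArg (fun π : Equiv.Perm (Fin (m+1)) => π (Fin.succ x)) h
      simp only [permDecomp_comp_succ] at this
      exact Fin.succAbove_right_injective this
    rw [he]
  · simp [Fintype.card_perm, Nat.factorial_succ]

/-- The unguarded coboundary sum is alternating. -/
lemma sign_sq (e : Equiv.Perm (Fin m)) :
    ((Equiv.Perm.sign e : ℤ) : ℝ) * ((Equiv.Perm.sign e : ℤ) : ℝ) = 1 := by
  rcases Int.units_eq_one_or (Equiv.Perm.sign e) with h | h <;> rw [h] <;> norm_num

lemma antisym_sum {K : Finset (Finset V)} {m : ℕ} {f : (Fin m → V) → ℝ}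
    (hf : IsCochain K m f) (u : Fin (m + 1) → V) :
    ∑ π : Equiv.Perm (Fin (m + 1)), ((Equiv.Perm.sign π : ℤ) : ℝ) * f (u ∘ ⇑π ∘ Fin.succ)
      = (m.factorial : ℝ) * ∑ j : Fin (m + 1), (-1 : ℝ) ^ (j : ℕ) * f (u ∘ Fin.succAbove j) := by
  rw [← Fintype.sum_bijective (permDecomp m) (permDecomp_bijective m) _ _ (fun je => rfl)]
  rw [Fintype.sum_prod_type]
  have hterm : ∀ (j : Fin (m + 1)) (e : Equiv.Perm (Fin m)),
      ((Equiv.Perm.sign (permDecomp m (j, e)) : ℤ) : ℝ) * f (u ∘ ⇑(permDecomp m (j, e)) ∘ Fin.succ)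
        = (-1 : ℝ) ^ (j : ℕ) * f (u ∘ Fin.succAbove j) := by
    intro j e
    have hcomp : u ∘ ⇑(permDecomp m (j, e)) ∘ Fin.succ = (u ∘ Fin.succAbove j) ∘ ⇑e := by
      ext x; simp [Function.comp, permDecomp_comp_succ]
    have hs : ((Equiv.Perm.sign e : ℤ) : ℝ) ^ 2 = 1 := by
      rcases Int.units_eq_one_or (Equiv.Perm.sign e) with h | h <;> rw [h] <;> norm_num
    rw [hcomp, cochain_sign hf e, permDecomp_sign]
    push_cast
    ring_nf
    rw [hs, one_mul]
  calc ∑ j : Fin (m + 1), ∑ e : Equiv.Perm (Fin m),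
        ((Equiv.Perm.sign (permDecomp m (j, e)) : ℤ) : ℝ) *
          f (u ∘ ⇑(permDecomp m (j, e)) ∘ Fin.succ)
      = ∑ j : Fin (m + 1), ∑ _e : Equiv.Perm (Fin m),
          (-1 : ℝ) ^ (j : ℕ) * f (u ∘ Fin.succAbove j) := by
        refine Finset.sum_congr rfl fun j _ => Finset.sum_congr rfl fun e _ => hterm j e
    _ = (m.factorial : ℝ) * ∑ j : Fin (m + 1), (-1 : ℝ) ^ (j : ℕ) * f (u ∘ Fin.succAbove j) := by
        simp [Finset.sum_const, Fintype.card_perm, Finset.mul_sum, mul_comm]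

lemma cobound_sum_sign {K : Finset (Finset V)} {m : ℕ} {f : (Fin m → V) → ℝ}
    (hf : IsCochain K m f) (τ : Equiv.Perm (Fin (m + 1))) (u : Fin (m + 1) → V) :
    (∑ j : Fin (m + 1), (-1 : ℝ) ^ (j : ℕ) * f ((u ∘ τ) ∘ Fin.succAbove j))
      = ((Equiv.Perm.sign τ : ℤ) : ℝ) *
        ∑ j : Fin (m + 1), (-1 : ℝ) ^ (j : ℕ) * f (u ∘ Fin.succAbove j) := by
  have hfac : (m.factorial : ℝ) ≠ 0 := Nat.cast_ne_zero.2 (Nat.factorial_ne_zero m)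
  apply mul_left_cancel₀ hfac
  rw [← antisym_sum hf (u ∘ ⇑τ)]
  have key : ∑ π : Equiv.Perm (Fin (m + 1)),
      ((Equiv.Perm.sign π : ℤ) : ℝ) * f ((u ∘ ⇑τ) ∘ ⇑π ∘ Fin.succ)
      = ((Equiv.Perm.sign τ : ℤ) : ℝ) * ∑ π : Equiv.Perm (Fin (m + 1)),
          ((Equiv.Perm.sign π : ℤ) : ℝ) * f (u ∘ ⇑π ∘ Fin.succ) := by
    rw [Finset.mul_sum]
    refine Fintype.sum_bijective (fun π => τ * π)
      (Group.mulLeft_bijective τ) _ _ (fun π => ?_)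
    have hcomp : (u ∘ ⇑τ) ∘ ⇑π ∘ Fin.succ = u ∘ ⇑(τ * π) ∘ Fin.succ := rfl
    have hs : ((Equiv.Perm.sign τ : ℤ) : ℝ) ^ 2 = 1 := by
      rcases Int.units_eq_one_or (Equiv.Perm.sign τ) with h | h <;> rw [h] <;> norm_num
    rw [hcomp, Equiv.Perm.sign_mul]
    push_cast
    ring_nf
    rw [hs]
    ring
  rw [key, antisym_sum hf u]
  ring

lemma cobound_isCochain {K : Finset (Finset V)} {m : ℕ} {f : (Fin m → V) → ℝ}
    (hf : IsCochain K m f) : IsCochain K (m + 1) (cobound K f) := by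
  constructor
  · intro σ u
    unfold cobound
    rw [if_congr (allowed_comp_perm K u σ) rfl rfl]
    by_cases h : Allowed K u
    · rw [if_pos h, if_pos h, cobound_sum_sign hf σ u]
    · simp [if_neg h]
  · intro u hu
    simp [cobound, if_neg hu]

lemma rho_isCochain {K : Finset (Finset V)} {m : ℕ} {f : (Fin m → V) → ℝ}
    (hf : IsCochain K m f) (v : V) : IsCochain K m (rho v f) := by
  constructor
  · intro σ s
    unfold rho
    have : (∃ j, (s ∘ σ) j = v) ↔ (∃ j, s j = v) :=
      ⟨fun ⟨j, hj⟩ => ⟨σ j, hj⟩, fun ⟨j, hj⟩ => ⟨σ.symm j, by simpa using hj⟩⟩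
    rw [if_congr this rfl rfl]
    by_cases h : ∃ j, s j = v
    · rw [if_pos h, if_pos h, cochain_sign hf]
    · simp [if_neg h]
  · intro s hs
    simp [rho, cochain_zero hf hs]

lemma wt_pos {K : Finset (Finset V)} {n : ℕ} (hpure : IsPureDim K n) {A : Finset V}
    (hA : A ∈ K) : 0 < wt K n A := by
  obtain ⟨t, ht, hsub, hcard⟩ := hpure.2 A hA
  exact Finset.card_pos.2 ⟨t, Finset.mem_filter.2 ⟨ht, hsub, hcard⟩⟩

lemma wt_eq_zero_of_not_mem {K : Finset (Finset V)} {n : ℕ} (hcplx : IsComplex K)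
    {A : Finset V} (hA : A ∉ K) (hne : A.Nonempty) : wt K n A = 0 := by
  rw [wt, Finset.card_eq_zero, Finset.filter_eq_empty_iff]
  rintro t ht ⟨hsub, -⟩
  exact hA (hcplx.2 t ht A hsub hne)

lemma wt_insert_eq {K : Finset (Finset V)} {n : ℕ} {A : Finset V} {x : V} (hx : x ∉ A) :
    wt K n (insert x A) =
      ((K.filter fun t => A ⊆ t ∧ t.card = n + 1).filter fun t => x ∈ t).card := by
  unfold wt
  congr 1
  rw [Finset.filter_filter]
  apply Finset.filter_congr
  intro t _
  rw [Finset.insert_subset_iff]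
  tauto

/-- Double counting: the weighted number of cofaces, natural number version. -/
lemma wt_sum_nat {K : Finset (Finset V)} {n : ℕ} (hcplx : IsComplex K)
    {A : Finset V} (hA : A ∈ K) :
    ∑ x : V, (if x ∉ A ∧ insert x A ∈ K then wt K n (insert x A) else 0)
      = (n + 1 - A.card) * wt K n A := by
  classical
  set T := K.filter fun t => A ⊆ t ∧ t.card = n + 1 with hT
  have hstep : ∀ x : V,
      (if x ∉ A ∧ insert x A ∈ K then wt K n (insert x A) else 0)
        = (T.filter fun t => x ∈ t ∧ x ∉ A).card := by
    intro x
    by_cases hxA : x ∈ A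
    · rw [if_neg (by tauto)]
      symm
      rw [Finset.card_eq_zero, Finset.filter_eq_empty_iff]
      tauto
    · have hwt : wt K n (insert x A) = (T.filter fun t => x ∈ t ∧ x ∉ A).card := by
        rw [wt_insert_eq hxA]
        congr 1
        rw [Finset.filter_filter, Finset.filter_filter]
        apply Finset.filter_congr
        intro t _
        tauto
      by_cases hins : insert x A ∈ K
      · rw [if_pos ⟨hxA, hins⟩, hwt]
      · rw [if_neg (by tauto), ← hwt, wt_eq_zero_of_not_mem hcplx hins
          (Finset.insert_nonempty x A)]
  calc ∑ x : V, (if x ∉ A ∧ insert x A ∈ K then wt K n (insert x A) else 0)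
      = ∑ x : V, (T.filter fun t => x ∈ t ∧ x ∉ A).card := by
        exact Finset.sum_congr rfl fun x _ => hstep x
    _ = ∑ x : V, ∑ t ∈ T, (if x ∈ t ∧ x ∉ A then 1 else 0) := by
        refine Finset.sum_congr rfl fun x _ => ?_
        rw [Finset.card_filter]
    _ = ∑ t ∈ T, ∑ x : V, (if x ∈ t ∧ x ∉ A then 1 else 0) := Finset.sum_comm
    _ = ∑ t ∈ T, (t \ A).card := by
        refine Finset.sum_congr rfl fun t _ => ?_
        rw [← Finset.card_filter]
        congr 1
        ext x
        simp [Finset.mem_sdiff]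
    _ = ∑ t ∈ T, (n + 1 - A.card) := by
        refine Finset.sum_congr rfl fun t ht => ?_
        rw [hT, Finset.mem_filter] at ht
        rw [Finset.card_sdiff_of_subset ht.2.1, ht.2.2]
    _ = (n + 1 - A.card) * wt K n A := by
        rw [Finset.sum_const, smul_eq_mul, mul_comm]
        rfl

/-- Double counting: the weighted number of cofaces. -/
lemma wt_sum {K : Finset (Finset V)} {n : ℕ} (hcplx : IsComplex K)
    {A : Finset V} (hA : A ∈ K) :
    ∑ x : V, (if x ∉ A ∧ insert x A ∈ K then (wt K n (insert x A) : ℝ) else 0)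
      = ((n + 1 - A.card : ℕ) : ℝ) * (wt K n A : ℕ) := by
  have := wt_sum_nat (n := n) hcplx hA
  have hcast : ((∑ x : V, (if x ∉ A ∧ insert x A ∈ K then wt K n (insert x A) else 0) : ℕ) : ℝ)
      = ∑ x : V, (if x ∉ A ∧ insert x A ∈ K then (wt K n (insert x A) : ℝ) else 0) := by
    push_cast
    refine Finset.sum_congr rfl fun x _ => ?_
    split <;> simp
  rw [← hcast, this]
  push_cast
  ring

lemma cycleRange_symm_comp_succ {m : ℕ} (j : Fin (m + 1)) :
    ⇑(Fin.cycleRange j).symm ∘ Fin.succ = Fin.succAbove j := by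
  funext x
  apply (Fin.cycleRange j).injective
  simp [Fin.cycleRange_succAbove]

lemma sign_cycleRange_symm {m : ℕ} (j : Fin (m + 1)) :
    Equiv.Perm.sign (Fin.cycleRange j).symm = (-1) ^ (j : ℕ) := by
  rw [Equiv.Perm.sign_symm, Fin.sign_cycleRange]

lemma card_image_allowed {K : Finset (Finset V)} {m : ℕ} {v : Fin m → V}
    (hv : Allowed K v) : (Finset.image v Finset.univ).card = m := by
  rw [Finset.card_image_of_injective _ hv.1, Finset.card_univ, Fintype.card_fin]

lemma mem_verts_of_allowed {K : Finset (Finset V)} (hcplx : IsComplex K) {m : ℕ}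
    {v : Fin m → V} (hv : Allowed K v) (k : Fin m) : v k ∈ verts K := by
  rw [verts, Finset.mem_filter]
  refine ⟨Finset.mem_univ _, hcplx.2 _ hv.2 {v k} ?_ ⟨v k, Finset.mem_singleton_self _⟩⟩
  rw [Finset.singleton_subset_iff, Finset.mem_image]
  exact ⟨k, Finset.mem_univ _, rfl⟩

lemma image_cons {m : ℕ} (x : V) (s : Fin m → V) :
    Finset.image (Fin.cons x s) Finset.univ = insert x (Finset.image s Finset.univ) := by
  ext y
  simp only [Finset.mem_image, Finset.mem_univ, true_and, Fin.exists_fin_succ, Fin.cons_zero,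
    Fin.cons_succ, Finset.mem_insert]
  tauto

lemma allowed_cons_iff {K : Finset (Finset V)} {m : ℕ} {x : V} {s : Fin m → V}
    (hs : Function.Injective s) :
    Allowed K (Fin.cons x s) ↔
      (x ∉ Finset.image s Finset.univ ∧ insert x (Finset.image s Finset.univ) ∈ K) := by
  unfold Allowed
  rw [Fin.cons_injective_iff, image_cons]
  have hx : x ∉ Set.range s ↔ x ∉ Finset.image s Finset.univ := by simp [Set.range]
  tauto

lemma cons_comp_succ {m : ℕ} (x : V) (s : Fin m → V) : Fin.cons x s ∘ Fin.succ = s :=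
  funext fun k => by simp

lemma sum_cons_split {m : ℕ} (G : (Fin (m + 1) → V) → ℝ) :
    ∑ u : Fin (m + 1) → V, G u = ∑ x : V, ∑ s : Fin m → V, G (Fin.cons x s) := by
  rw [← Equiv.sum_comp (Fin.consEquiv fun _ => V) G, Fintype.sum_prod_type]
  rfl

/-- Rotating the `j`-th face sum to the `0`-th face sum. -/
lemma rot_sum {K : Finset (Finset V)} {n m : ℕ} (j : Fin (m + 1)) (ε : ℝ)
    (hε : ε * ε = 1) (h : (Fin (m + 1) → V) → ℝ) (g : (Fin m → V) → ℝ)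
    (hh : ∀ u : Fin (m + 1) → V, h (u ∘ ⇑(Fin.cycleRange j).symm) = ε * h u) :
    ∑ u : Fin (m + 1) → V, (if Allowed K u then
        (wt K n (Finset.image u Finset.univ) : ℝ) * h u *
          (ε * g (u ∘ Fin.succAbove j)) else 0)
      = ∑ u : Fin (m + 1) → V, (if Allowed K u then
          (wt K n (Finset.image u Finset.univ) : ℝ) * h u * g (u ∘ Fin.succ) else 0) := by
  set G : (Fin (m + 1) → V) → ℝ := fun u => if Allowed K u then
    (wt K n (Finset.image u Finset.univ) : ℝ) * h u * g (u ∘ Fin.succ) else 0 with hG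
  calc ∑ u : Fin (m + 1) → V, (if Allowed K u then
        (wt K n (Finset.image u Finset.univ) : ℝ) * h u *
          (ε * g (u ∘ Fin.succAbove j)) else 0)
      = ∑ u : Fin (m + 1) → V, G (u ∘ ⇑(Fin.cycleRange j).symm) := by
        refine Finset.sum_congr rfl fun u _ => ?_
        rw [hG]
        simp only
        rw [if_congr (allowed_comp_perm K u _) rfl rfl, image_comp_perm, hh]
        have hcomp : (u ∘ ⇑(Fin.cycleRange j).symm) ∘ Fin.succ = u ∘ Fin.succAbove j := by
          rw [Function.comp_assoc, cycleRange_symm_comp_succ]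
        rw [hcomp]
        split
        · ring
        · rfl
    _ = ∑ u : Fin (m + 1) → V, G u := sum_comp_perm G _

/-- Adjointness of the coboundary and `δ`. -/
lemma adjoint {K : Finset (Finset V)} {n m : ℕ} (hpure : IsPureDim K n)
    {h : (Fin (m + 1) → V) → ℝ} (hh : IsCochain K (m + 1) h)
    {g : (Fin m → V) → ℝ} (hg : IsCochain K m g) :
    innerC K n m (codiff K n h) g = innerC K n (m + 1) h (cobound K g) := by
  set N : ℝ := ∑ u : Fin (m + 1) → V, (if Allowed K u then
    (wt K n (Finset.image u Finset.univ) : ℝ) * h u * g (u ∘ Fin.succ) else 0) with hN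
  have step1 : ∑ s : Fin m → V,
      (wt K n (Finset.image s Finset.univ) : ℝ) * (codiff K n h) s * g s = N := by
    have per_s : ∀ s : Fin m → V,
        (wt K n (Finset.image s Finset.univ) : ℝ) * (codiff K n h) s * g s
          = ∑ x : V, (if Allowed K (Fin.cons x s) then
              (wt K n (Finset.image (Fin.cons x s) Finset.univ) : ℝ) *
                h (Fin.cons x s) * g s else 0) := by
      intro s
      rw [codiff]
      rw [Finset.mul_sum, Finset.sum_mul]
      refine Finset.sum_congr rfl fun x _ => ?_
      by_cases hal : Allowed K (Fin.cons x s)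
      · rw [if_pos hal, if_pos hal]
        by_cases hgs : g s = 0
        · rw [hgs]; ring
        · have hsal : Allowed K s := by
            by_contra hc
            exact hgs (cochain_zero hg hc)
          have hw : (0 : ℝ) < (wt K n (Finset.image s Finset.univ) : ℝ) := by
            exact_mod_cast wt_pos hpure hsal.2
          field_simp
      · rw [if_neg hal, if_neg hal, mul_zero, zero_mul]
    rw [Finset.sum_congr rfl fun s _ => per_s s, hN, sum_cons_split, Finset.sum_comm]
    refine Finset.sum_congr rfl fun s _ => Finset.sum_congr rfl fun x _ => ?_
    rw [cons_comp_succ]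
  have step2 : ∑ u : Fin (m + 1) → V,
      (wt K n (Finset.image u Finset.univ) : ℝ) * h u * (cobound K g) u
        = ((m : ℝ) + 1) * N := by
    have per_u : ∀ u : Fin (m + 1) → V,
        (wt K n (Finset.image u Finset.univ) : ℝ) * h u * (cobound K g) u
          = ∑ j : Fin (m + 1), (if Allowed K u then
              (wt K n (Finset.image u Finset.univ) : ℝ) * h u *
                ((-1 : ℝ) ^ (j : ℕ) * g (u ∘ Fin.succAbove j)) else 0) := by
      intro u
      rw [cobound]
      by_cases hal : Allowed K u
      · simp only [if_pos hal, Finset.mul_sum]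
      · simp only [if_neg hal, mul_zero, Finset.sum_const_zero]
    rw [Finset.sum_congr rfl fun u _ => per_u u, Finset.sum_comm]
    have per_j : ∀ j : Fin (m + 1),
        ∑ u : Fin (m + 1) → V, (if Allowed K u then
            (wt K n (Finset.image u Finset.univ) : ℝ) * h u *
              ((-1 : ℝ) ^ (j : ℕ) * g (u ∘ Fin.succAbove j)) else 0) = N := by
      intro j
      refine rot_sum j ((-1 : ℝ) ^ (j : ℕ)) ?_ h g ?_
      · rw [← pow_add]
        exact Even.neg_one_pow ⟨(j : ℕ), rfl⟩
      · intro u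
        rw [cochain_sign hh ((Fin.cycleRange j).symm) u, sign_cycleRange_symm]
        push_cast
        ring_nf
    rw [Finset.sum_congr rfl fun j _ => per_j j, Finset.sum_const, Finset.card_univ,
      Fintype.card_fin, nsmul_eq_mul]
    push_cast
    ring
  rw [innerC, innerC, step1, step2]
  rw [Nat.factorial_succ]
  have : (m.factorial : ℝ) ≠ 0 := Nat.cast_ne_zero.2 (Nat.factorial_ne_zero m)
  field_simp
  push_cast; ring

/-- `(Δg, g) = (dg, dg)`. -/
lemma lap_inner {K : Finset (Finset V)} {n m : ℕ} (hpure : IsPureDim K n)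
    {g : (Fin m → V) → ℝ} (hg : IsCochain K m g) :
    innerC K n m (lap K n g) g = innerC K n (m + 1) (cobound K g) (cobound K g) := by
  rw [lap]
  exact adjoint hpure (cobound_isCochain hg) hg

/-- Localization of the inner product `(ρ_v f, f)` summed over vertices. -/
lemma sum_rho_inner {K : Finset (Finset V)} {n m : ℕ} (hcplx : IsComplex K)
    {f : (Fin m → V) → ℝ} (hf : IsCochain K m f) :
    ∑ v ∈ verts K, innerC K n m (rho v f) f = (m : ℝ) * innerC K n m f f := by
  unfold innerC
  rw [← Finset.sum_div, mul_div_assoc']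
  congr 1
  rw [Finset.sum_comm, Finset.mul_sum]
  refine Finset.sum_congr rfl fun s _ => ?_
  by_cases hfs : f s = 0
  · simp [rho, hfs]
  · have hal : Allowed K s := by
      by_contra hc; exact hfs (cochain_zero hf hc)
    have step : ∀ v : V, (wt K n (Finset.image s Finset.univ) : ℝ) * rho v f s * f s
        = if (∃ j, s j = v) then
            (wt K n (Finset.image s Finset.univ) : ℝ) * f s * f s else 0 := by
      intro v
      rw [rho]
      split <;> ring
    rw [show ∑ v ∈ verts K, (wt K n (Finset.image s Finset.univ) : ℝ) * rho v f s * f s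
        = ∑ v ∈ verts K, (if (∃ j, s j = v) then
            (wt K n (Finset.image s Finset.univ) : ℝ) * f s * f s else 0)
      from Finset.sum_congr rfl fun v _ => step v,
      ← Finset.sum_filter (fun v => ∃ j, s j = v)
        (fun _ => (wt K n (Finset.image s Finset.univ) : ℝ) * f s * f s)]
    have hfilter : (verts K).filter (fun v => ∃ j, s j = v) = Finset.image s Finset.univ := by
      ext v
      simp only [Finset.mem_filter, Finset.mem_image, Finset.mem_univ, true_and]
      constructor
      · rintro ⟨-, j, rfl⟩; exact ⟨j, rfl⟩
      · rintro ⟨j, rfl⟩; exact ⟨mem_verts_of_allowed hcplx hal j, j, rfl⟩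
    rw [hfilter, Finset.sum_const, card_image_allowed hal, nsmul_eq_mul]

lemma cobound_rho_eq_zero {K : Finset (Finset V)} {m : ℕ} {f : (Fin m → V) → ℝ}
    {u : Fin (m + 1) → V} (hal : Allowed K u) {v : V}
    (hv : v ∉ Finset.image u Finset.univ) : cobound K (rho v f) u = 0 := by
  rw [cobound, if_pos hal]
  refine Finset.sum_eq_zero fun j _ => ?_
  have : rho v f (u ∘ Fin.succAbove j) = 0 := by
    rw [rho, if_neg]
    rintro ⟨l, rfl⟩
    exact hv (Finset.mem_image.2 ⟨Fin.succAbove j l, Finset.mem_univ _, rfl⟩)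
  rw [this, mul_zero]

lemma cobound_rho_apply {K : Finset (Finset V)} {m : ℕ} {f : (Fin m → V) → ℝ}
    {u : Fin (m + 1) → V} (hal : Allowed K u) (k : Fin (m + 1)) :
    cobound K (rho (u k) f) u
      = cobound K f u - (-1 : ℝ) ^ (k : ℕ) * f (u ∘ Fin.succAbove k) := by
  rw [cobound, cobound, if_pos hal, if_pos hal]
  have per_j : ∀ j : Fin (m + 1),
      (-1 : ℝ) ^ (j : ℕ) * rho (u k) f (u ∘ Fin.succAbove j)
        = (-1 : ℝ) ^ (j : ℕ) * f (u ∘ Fin.succAbove j)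
          - (if j = k then (-1 : ℝ) ^ (k : ℕ) * f (u ∘ Fin.succAbove k) else 0) := by
    intro j
    have hcond : (∃ l, (u ∘ Fin.succAbove j) l = u k) ↔ j ≠ k := by
      constructor
      · rintro ⟨l, hl⟩
        have : Fin.succAbove j l = k := hal.1 hl
        rintro rfl
        exact Fin.succAbove_ne j l this
      · intro hjk
        obtain ⟨z, hz⟩ := Fin.exists_succAbove_eq (Ne.symm hjk)
        exact ⟨z, by rw [Function.comp_apply, hz]⟩
    rw [rho]
    by_cases hjk : j = k
    · subst hjk
      rw [if_neg (fun h => (hcond.1 h) rfl), if_pos rfl]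
      ring
    · rw [if_pos (hcond.2 hjk), if_neg hjk, sub_zero]
  rw [Finset.sum_congr rfl fun j _ => per_j j, Finset.sum_sub_distrib,
    Finset.sum_ite_eq' Finset.univ k
      (fun _ => (-1 : ℝ) ^ (k : ℕ) * f (u ∘ Fin.succAbove k)),
    if_pos (Finset.mem_univ k)]

/-- The pointwise Garland identity. -/
lemma per_tuple {K : Finset (Finset V)} {m : ℕ} (hcplx : IsComplex K)
    {f : (Fin m → V) → ℝ} {u : Fin (m + 1) → V} (hal : Allowed K u) :
    ∑ v ∈ verts K, cobound K (rho v f) u * cobound K (rho v f) u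
      = ((m : ℝ) - 1) * (cobound K f u * cobound K f u)
        + ∑ k : Fin (m + 1), f (u ∘ Fin.succAbove k) * f (u ∘ Fin.succAbove k) := by
  set D : ℝ := cobound K f u with hD
  have hrestrict : ∑ v ∈ verts K, cobound K (rho v f) u * cobound K (rho v f) u
      = ∑ v ∈ Finset.image u Finset.univ,
          cobound K (rho v f) u * cobound K (rho v f) u := by
    symm
    refine Finset.sum_subset ?_ ?_
    · intro v hv
      obtain ⟨k, -, rfl⟩ := Finset.mem_image.1 hv
      exact mem_verts_of_allowed hcplx hal k
    · intro v _ hv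
      rw [cobound_rho_eq_zero hal hv, mul_zero]
  have himage : ∑ v ∈ Finset.image u Finset.univ,
      cobound K (rho v f) u * cobound K (rho v f) u
        = ∑ k : Fin (m + 1), cobound K (rho (u k) f) u * cobound K (rho (u k) f) u :=
    Finset.sum_image fun x _ y _ h => hal.1 h
  rw [hrestrict, himage]
  have expand : ∀ k : Fin (m + 1),
      cobound K (rho (u k) f) u * cobound K (rho (u k) f) u
        = D * D - 2 * ((-1 : ℝ) ^ (k : ℕ) * f (u ∘ Fin.succAbove k)) * D
          + f (u ∘ Fin.succAbove k) * f (u ∘ Fin.succAbove k) := by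
    intro k
    rw [cobound_rho_apply hal k, ← hD]
    have h2 : ((-1 : ℝ) ^ (k : ℕ)) * ((-1 : ℝ) ^ (k : ℕ)) = 1 := by
      rw [← pow_add]; exact Even.neg_one_pow ⟨(k : ℕ), rfl⟩
    nlinarith [h2]
  rw [Finset.sum_congr rfl fun k _ => expand k]
  have hsum1 : ∑ k : Fin (m + 1),
      (-1 : ℝ) ^ (k : ℕ) * f (u ∘ Fin.succAbove k) = D := by
    rw [hD, cobound, if_pos hal]
  rw [Finset.sum_add_distrib, Finset.sum_sub_distrib, Finset.sum_const, Finset.card_univ,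
    Fintype.card_fin, nsmul_eq_mul]
  have : ∑ k : Fin (m + 1), 2 * ((-1 : ℝ) ^ (k : ℕ) * f (u ∘ Fin.succAbove k)) * D
      = 2 * D * D := by
    rw [← Finset.sum_mul, ← Finset.mul_sum, hsum1]
  rw [this]
  have hgoal : ∀ S E : ℝ, ((m : ℝ) + 1) * (E * E) - 2 * E * E + S
      = ((m : ℝ) - 1) * (E * E) + S := fun S E => by ring
  have hcast : ((m + 1 : ℕ) : ℝ) = (m : ℝ) + 1 := by exact_mod_cast rfl
  rw [hcast]
  exact hgoal _ _

/-- Garland's localization identity summed over vertices. -/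
lemma sum_drho {K : Finset (Finset V)} {n m : ℕ} (hcplx : IsComplex K)
    (hpure : IsPureDim K n) {f : (Fin m → V) → ℝ} (hf : IsCochain K m f) :
    ∑ v ∈ verts K, innerC K n (m + 1) (cobound K (rho v f)) (cobound K (rho v f))
      = ((m : ℝ) - 1) * innerC K n (m + 1) (cobound K f) (cobound K f)
        + ((n + 1 - m : ℕ) : ℝ) * innerC K n m f f := by
  unfold innerC
  rw [← Finset.sum_div]
  have key : ∑ v ∈ verts K, ∑ u : Fin (m + 1) → V,
      (wt K n (Finset.image u Finset.univ) : ℝ) * cobound K (rho v f) u *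
        cobound K (rho v f) u
      = ((m : ℝ) - 1) * ∑ u : Fin (m + 1) → V,
          (wt K n (Finset.image u Finset.univ) : ℝ) * cobound K f u * cobound K f u
        + ((m : ℝ) + 1) * (((n + 1 - m : ℕ) : ℝ) *
            ∑ s : Fin m → V, (wt K n (Finset.image s Finset.univ) : ℝ) * f s * f s) := by
    rw [Finset.sum_comm]
    have per_u : ∀ u : Fin (m + 1) → V,
        ∑ v ∈ verts K, (wt K n (Finset.image u Finset.univ) : ℝ) *
            cobound K (rho v f) u * cobound K (rho v f) u
          = ((m : ℝ) - 1) * ((wt K n (Finset.image u Finset.univ) : ℝ) *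
              cobound K f u * cobound K f u)
            + (if Allowed K u then (wt K n (Finset.image u Finset.univ) : ℝ) *
                (∑ k : Fin (m + 1), f (u ∘ Fin.succAbove k) * f (u ∘ Fin.succAbove k))
              else 0) := by
      intro u
      by_cases hal : Allowed K u
      · have : ∀ v ∈ verts K, (wt K n (Finset.image u Finset.univ) : ℝ) *
            cobound K (rho v f) u * cobound K (rho v f) u
            = (wt K n (Finset.image u Finset.univ) : ℝ) *
                (cobound K (rho v f) u * cobound K (rho v f) u) := fun v _ => by ring
        rw [Finset.sum_congr rfl this, ← Finset.mul_sum, per_tuple hcplx hal, if_pos hal]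
        ring
      · have hz : cobound K f u = 0 := by rw [cobound, if_neg hal]
        have hzv : ∀ v ∈ verts K, (wt K n (Finset.image u Finset.univ) : ℝ) *
            cobound K (rho v f) u * cobound K (rho v f) u = 0 := by
          intro v _
          rw [cobound, if_neg hal]
          ring
        rw [Finset.sum_congr rfl hzv, Finset.sum_const, smul_zero, hz, if_neg hal]
        ring
    rw [Finset.sum_congr rfl fun u _ => per_u u, Finset.sum_add_distrib, ← Finset.mul_sum]
    congr 1
    -- second summand
    have hsplit : ∀ u : Fin (m + 1) → V,
        (if Allowed K u then (wt K n (Finset.image u Finset.univ) : ℝ) *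
            (∑ k : Fin (m + 1), f (u ∘ Fin.succAbove k) * f (u ∘ Fin.succAbove k)) else 0)
          = ∑ k : Fin (m + 1), (if Allowed K u then
              (wt K n (Finset.image u Finset.univ) : ℝ) * (1 : ℝ) *
                ((1 : ℝ) * (f (u ∘ Fin.succAbove k) * f (u ∘ Fin.succAbove k))) else 0) := by
      intro u
      split
      · rw [Finset.mul_sum]
        exact Finset.sum_congr rfl fun k _ => by ring
      · rw [Finset.sum_const_zero]
    rw [Finset.sum_congr rfl fun u _ => hsplit u, Finset.sum_comm]
    have per_k : ∀ k : Fin (m + 1), ∑ u : Fin (m + 1) → V,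
        (if Allowed K u then (wt K n (Finset.image u Finset.univ) : ℝ) * (1 : ℝ) *
            ((1 : ℝ) * (f (u ∘ Fin.succAbove k) * f (u ∘ Fin.succAbove k))) else 0)
          = ∑ u : Fin (m + 1) → V, (if Allowed K u then
              (wt K n (Finset.image u Finset.univ) : ℝ) * (1 : ℝ) *
                (f (u ∘ Fin.succ) * f (u ∘ Fin.succ)) else 0) := by
      intro k
      exact rot_sum k 1 (one_mul 1) (fun _ => (1 : ℝ))
        (fun s => f s * f s) (fun u => (one_mul (1 : ℝ)).symm)
    rw [Finset.sum_congr rfl fun k _ => per_k k, Finset.sum_const, Finset.card_univ,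
      Fintype.card_fin, nsmul_eq_mul]
    have base : ∑ u : Fin (m + 1) → V, (if Allowed K u then
        (wt K n (Finset.image u Finset.univ) : ℝ) * (1 : ℝ) *
          (f (u ∘ Fin.succ) * f (u ∘ Fin.succ)) else 0)
        = ((n + 1 - m : ℕ) : ℝ) *
            ∑ s : Fin m → V, (wt K n (Finset.image s Finset.univ) : ℝ) * f s * f s := by
      rw [sum_cons_split, Finset.sum_comm, Finset.mul_sum]
      refine Finset.sum_congr rfl fun s _ => ?_
      by_cases hfs : f s = 0
      · simp [cons_comp_succ, hfs]
      · have hsal : Allowed K s := by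
          by_contra hc; exact hfs (cochain_zero hf hc)
        have hper : ∀ x : V, (if Allowed K (Fin.cons x s) then
            (wt K n (Finset.image (Fin.cons x s) Finset.univ) : ℝ) * (1 : ℝ) *
              (f (Fin.cons x s ∘ Fin.succ) * f (Fin.cons x s ∘ Fin.succ)) else 0)
            = (if x ∉ Finset.image s Finset.univ ∧
                insert x (Finset.image s Finset.univ) ∈ K then
                (wt K n (insert x (Finset.image s Finset.univ)) : ℝ) else 0)
              * (f s * f s) := by
          intro x
          rw [cons_comp_succ, if_congr (allowed_cons_iff hsal.1) rfl rfl, image_cons]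
          split
          · ring
          · ring
        rw [Finset.sum_congr rfl fun x _ => hper x, ← Finset.sum_mul,
          wt_sum hcplx hsal.2, card_image_allowed hsal]
        ring
    rw [base]
    push_cast
    ring
  rw [key]
  have hm1 : (m.factorial : ℝ) ≠ 0 := Nat.cast_ne_zero.2 (Nat.factorial_ne_zero m)
  rw [Nat.factorial_succ]
  push_cast
  field_simp

end Garland
/-- if `(Δρ_v f, ρ_v f) ≤ Λ·(ρ_v f, f)` for some `Λ > 0` and every vertex
`v` of `X`, then `i·(Δf,f) ≤ (Λ·(i+1) - (n-i))·(f,f)`. -/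
theorem garland_corollary
    [Fintype V] [DecidableEq V] (K : Finset (Finset V)) (n i : ℕ)
    (hcplx : IsComplex K) (hpure : IsPureDim K n) (hi : i + 1 ≤ n)
    (f : (Fin (i + 1) → V) → ℝ) (hf : IsCochain K (i + 1) f)
    (Λ : ℝ) (hΛpos : 0 < Λ)
    (hΛ : ∀ v ∈ verts K,
      innerC K n (i + 1) (lap K n (rho v f)) (rho v f)
        ≤ Λ * innerC K n (i + 1) (rho v f) f) :
    (i : ℝ) * innerC K n (i + 1) (lap K n f) f
      ≤ (Λ * ((i : ℝ) + 1) - ((n : ℝ) - (i : ℝ))) * innerC K n (i + 1) f f := by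
  classical
  have hP : innerC K n (i + 1) (lap K n f) f
      = innerC K n (i + 1 + 1) (cobound K f) (cobound K f) := lap_inner hpure hf
  have hL2 := sum_drho (n := n) hcplx hpure hf
  have hL1 := sum_rho_inner (n := n) hcplx hf
  have hsum_le : ∑ v ∈ verts K, innerC K n (i + 1) (lap K n (rho v f)) (rho v f)
      ≤ ∑ v ∈ verts K, Λ * innerC K n (i + 1) (rho v f) f := Finset.sum_le_sum hΛ
  have hL0 : ∑ v ∈ verts K, innerC K n (i + 1) (lap K n (rho v f)) (rho v f)
      = ∑ v ∈ verts K,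
          innerC K n (i + 1 + 1) (cobound K (rho v f)) (cobound K (rho v f)) :=
    Finset.sum_congr rfl fun v _ => lap_inner hpure (rho_isCochain hf v)
  rw [hL0, hL2, ← Finset.mul_sum, hL1] at hsum_le
  have hc1 : ((i + 1 : ℕ) : ℝ) - 1 = (i : ℝ) := by push_cast; ring
  have hc2 : ((n + 1 - (i + 1) : ℕ) : ℝ) = (n : ℝ) - (i : ℝ) := by
    have h : n + 1 - (i + 1) = n - i := by omega
    rw [h, Nat.cast_sub (by omega)]
  have hc3 : ((i + 1 : ℕ) : ℝ) = (i : ℝ) + 1 := by push_cast; ring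
  rw [hc1, hc2, hc3] at hsum_le
  rw [hP]
  ring_nf at hsum_le ⊢
  linarith
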